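/- Let ζ > 0 and λ ∈ (0,1) be constants, let the step ratios satisfy 0 < r_k < 1 + √2 for 2 ≤ k ≤ N, and let η ∈ (0,1) satisfy r_k²/(1+2r_k) < η for 2 ≤ k ≤ N. Let {v^k}_{k=1}^N and {w^k}_{k=0}^N be sequences of non-negative reals such that Σ_{k=1}^n d_{n−k}^{(n)}(w^k − w^{k−1}) ≤ ζ·Σ_{k=1}^{n−1} λ^{n−k−1} w^k + v^n for every 1 ≤ n ≤ N. Then w^n ≤ exp(ζ t_n/(1−λ))·(w^0 + Σ_{k=1}^n v^k / b_0^{(k)}) for every 1 ≤ n ≤ N, where t_n := τ_1 + ⋯ + τ_n. -/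

import Mathlib

/-- Adjacent step ratio: r_k = τ_k/τ_{k−1} for k ≥ 2, and r_1 = 0. -/
noncomputable def ratio (τ : ℕ → ℝ) (k : ℕ) : ℝ :=
  if 2 ≤ k then τ k / τ (k - 1) else 0

/-- Variable-step BDF2 convolution kernels b_j^{(n)}. -/
noncomputable def bker (τ : ℕ → ℝ) (n j : ℕ) : ℝ :=
  if n = 1 then (if j = 0 then 1 / τ 1 else 0)
  else if j = 0 then (1 + 2 * ratio τ n) / (τ n * (1 + ratio τ n))
  else if j = 1 then -(ratio τ n) ^ 2 / (τ n * (1 + ratio τ n))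
  else 0

/-- Variable-step BDF2 operator D₂w^n = Σ_{k=1}^n b_{n−k}^{(n)}(w^k − w^{k−1}). -/
noncomputable def D2 (τ : ℕ → ℝ) (w : ℕ → ℝ) (n : ℕ) : ℝ :=
  ∑ k ∈ Finset.Icc 1 n, bker τ n (n - k) * (w k - w (k - 1))

/-- Recombined kernels d_k^{(n)}: d_0^{(n)} = b_0^{(n)},
d_k^{(n)} = η^{k−1}(b_0^{(n)}η + b_1^{(n)}) for k ≥ 1 (so d_1^{(1)} = η b_0^{(1)}). -/
noncomputable def dker (τ : ℕ → ℝ) (η : ℝ) (n k : ℕ) : ℝ :=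
  if k = 0 then bker τ n 0
  else η ^ (k - 1) * (bker τ n 0 * η + bker τ n 1)

/- ### Auxiliary lemmas -/

lemma gr_telesc (e : ℕ → ℝ) : ∀ m : ℕ, ∑ k ∈ Finset.Icc 1 m, (e k - e (k-1)) = e m - e 0 := by
  intro m
  induction m with
  | zero => simp
  | succ m IH => rw [Finset.sum_Icc_succ_top (by omega), IH]; simp

lemma gr_geomIcc (lam : ℝ) (h0 : 0 ≤ lam) (h1 : lam < 1) :
    ∀ m : ℕ, ∑ k ∈ Finset.Icc 1 m, lam ^ (m - k) ≤ 1 / (1 - lam) := by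
  have hpos : (0:ℝ) < 1 - lam := by linarith
  intro m
  induction m with
  | zero => simpa using (one_div_pos.mpr hpos).le
  | succ m IH =>
    rw [Finset.sum_Icc_succ_top (by omega)]
    have e1 : ∑ k ∈ Finset.Icc 1 m, lam ^ (m + 1 - k)
        = lam * ∑ k ∈ Finset.Icc 1 m, lam ^ (m - k) := by
      rw [Finset.mul_sum]
      refine Finset.sum_congr rfl (fun k hk => ?_)
      have hk' := Finset.mem_Icc.mp hk
      have : m + 1 - k = (m - k) + 1 := by omega
      rw [this, pow_succ]; ring
    rw [e1]
    have h2 : lam * ∑ k ∈ Finset.Icc 1 m, lam ^ (m - k) ≤ lam * (1 / (1 - lam)) :=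
      mul_le_mul_of_nonneg_left IH h0
    have h3 : lam * (1 / (1 - lam)) + 1 = 1 / (1 - lam) := by
      field_simp
      ring
    simp only [Nat.sub_self, pow_zero]
    linarith

lemma gr_abel (w : ℕ → ℝ) : ∀ (n : ℕ), 1 ≤ n → ∀ (d : ℕ → ℝ),
    ∑ k ∈ Finset.Icc 1 n, d (n - k) * (w k - w (k-1)) =
      d 0 * w n - d (n-1) * w 0 +
        ∑ k ∈ Finset.Icc 1 (n-1), (d (n-k) - d (n-k-1)) * w k := by
  intro n
  induction n with
  | zero => omega
  | succ n IH =>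
    intro _ d
    rcases Nat.eq_zero_or_pos n with h0 | hpos
    · subst h0; simp; ring
    · have hn : 1 ≤ n := hpos
      rw [Finset.sum_Icc_succ_top (by omega)]
      have e1 : ∑ k ∈ Finset.Icc 1 n, d (n + 1 - k) * (w k - w (k-1))
          = ∑ k ∈ Finset.Icc 1 n, (fun j => d (j+1)) (n - k) * (w k - w (k-1)) := by
        refine Finset.sum_congr rfl (fun k hk => ?_)
        have hk' := Finset.mem_Icc.mp hk
        have : n + 1 - k = (n - k) + 1 := by omega
        rw [this]
      rw [e1, IH hn (fun j => d (j+1))]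
      have hsplit : ∑ k ∈ Finset.Icc 1 (n+1-1), (d (n+1-k) - d (n+1-k-1)) * w k
          = ∑ k ∈ Finset.Icc 1 (n-1), (d (n+1-k) - d (n+1-k-1)) * w k
            + (d 1 - d 0) * w n := by
        have hn' : n + 1 - 1 = (n-1) + 1 := by omega
        rw [hn', Finset.sum_Icc_succ_top (by omega)]
        have a1 : (n-1) + 1 = n := by omega
        rw [a1]
        have a2 : n + 1 - n = 1 := by omega
        rw [a2]
        try norm_num
      rw [hsplit]
      have e2 : ∑ k ∈ Finset.Icc 1 (n-1), (d ((n-k)+1) - d ((n-k-1)+1)) * w k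
          = ∑ k ∈ Finset.Icc 1 (n-1), (d (n+1-k) - d (n+1-k-1)) * w k := by
        refine Finset.sum_congr rfl (fun k hk => ?_)
        have hk' := Finset.mem_Icc.mp hk
        congr 3 <;> omega
      rw [e2]
      have a1 : 1 + (n-1) = n := by omega
      have a2 : 1 + n - (1+n) = 0 := by omega
      have a3 : 1 + n - 1 = n := by omega
      have a4 : n + 1 - 1 = n := by omega
      have a5 : n + 1 - (n+1) = 0 := by omega
      rw [show n - 1 + 1 = n from by omega] at *
      simp only [a1, a2, a3, a4, a5, Nat.add_sub_cancel]
      ring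

lemma gr_hb0 (N : ℕ) (τ : ℕ → ℝ) (hτ : ∀ k, 1 ≤ k → k ≤ N → 0 < τ k)
    (hr : ∀ k, 2 ≤ k → k ≤ N → 0 < ratio τ k ∧ ratio τ k < 1 + Real.sqrt 2) :
    ∀ k, 1 ≤ k → k ≤ N → 0 < bker τ k 0 := by
  intro k h1 h2
  by_cases hk : k = 1
  · subst hk
    simp [bker]
    exact hτ 1 le_rfl h2
  · have hrk := (hr k (by omega) h2).1
    have hτk := hτ k h1 h2
    simp [bker, hk]
    exact div_pos (by linarith) (by nlinarith)

lemma gr_hb1 (N : ℕ) (τ : ℕ → ℝ) (hτ : ∀ k, 1 ≤ k → k ≤ N → 0 < τ k)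
    (hr : ∀ k, 2 ≤ k → k ≤ N → 0 < ratio τ k ∧ ratio τ k < 1 + Real.sqrt 2) :
    ∀ k, 1 ≤ k → k ≤ N → bker τ k 1 ≤ 0 := by
  intro k h1 h2
  by_cases hk : k = 1
  · subst hk; simp [bker]
  · have hrk := (hr k (by omega) h2).1
    have hτk := hτ k h1 h2
    simp only [bker, if_neg hk]
    norm_num
    rw [neg_div, neg_nonpos]
    exact div_nonneg (sq_nonneg _) (by nlinarith)

lemma gr_hb0τ (N : ℕ) (τ : ℕ → ℝ) (hτ : ∀ k, 1 ≤ k → k ≤ N → 0 < τ k)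
    (hr : ∀ k, 2 ≤ k → k ≤ N → 0 < ratio τ k ∧ ratio τ k < 1 + Real.sqrt 2) :
    ∀ k, 1 ≤ k → k ≤ N → 1 ≤ τ k * bker τ k 0 := by
  intro k h1 h2
  by_cases hk : k = 1
  · subst hk
    simp [bker]
    exact le_of_eq (mul_inv_cancel₀ (hτ 1 le_rfl h2).ne').symm
  · have hrk := (hr k (by omega) h2).1
    have hτk := hτ k h1 h2
    simp only [bker, if_neg hk]
    norm_num
    rw [show τ k * ((1 + 2 * ratio τ k) / (τ k * (1 + ratio τ k)))
        = (1 + 2 * ratio τ k) / (1 + ratio τ k) from by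
      field_simp]
    rw [le_div_iff₀ (by linarith)]
    linarith

lemma gr_hq (N : ℕ) (τ : ℕ → ℝ) (hτ : ∀ k, 1 ≤ k → k ≤ N → 0 < τ k)
    (hr : ∀ k, 2 ≤ k → k ≤ N → 0 < ratio τ k ∧ ratio τ k < 1 + Real.sqrt 2)
    (η : ℝ) (hη0 : 0 < η)
    (hηr : ∀ k, 2 ≤ k → k ≤ N → (ratio τ k) ^ 2 / (1 + 2 * ratio τ k) < η) :
    ∀ k, 1 ≤ k → k ≤ N → 0 ≤ bker τ k 0 * η + bker τ k 1 := by
  intro k h1 h2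
  by_cases hk : k = 1
  · subst hk
    have := hτ 1 le_rfl h2
    simp [bker]
    positivity
  · have hrk := (hr k (by omega) h2).1
    have hτk := hτ k h1 h2
    have hq := hηr k (by omega) h2
    rw [div_lt_iff₀ (by linarith)] at hq
    simp only [bker, if_neg hk]
    norm_num
    rw [div_mul_eq_mul_div, neg_div, ← sub_eq_add_neg, div_sub_div_same]
    exact div_nonneg (by nlinarith) (by nlinarith)

/-- Discrete Grönwall-type lemma (Lemma 4.2): if
Σ_{k=1}^n d_{n−k}^{(n)}(w^k − w^{k−1}) ≤ ζΣ_{k=1}^{n−1} λ^{n−k−1}w^k + v^n for all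
1 ≤ n ≤ N, then w^n ≤ exp(ζ t_n/(1−λ))(w^0 + Σ_{k=1}^n v^k/b_0^{(k)}). -/
theorem stmt8 (N : ℕ) (τ : ℕ → ℝ) (hτ : ∀ k, 1 ≤ k → k ≤ N → 0 < τ k)
    (ζ lam : ℝ) (hζ : 0 < ζ) (hlam0 : 0 < lam) (hlam1 : lam < 1)
    (hr : ∀ k, 2 ≤ k → k ≤ N → 0 < ratio τ k ∧ ratio τ k < 1 + Real.sqrt 2)
    (η : ℝ) (hη0 : 0 < η) (hη1 : η < 1)
    (hηr : ∀ k, 2 ≤ k → k ≤ N → (ratio τ k) ^ 2 / (1 + 2 * ratio τ k) < η)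
    (v w : ℕ → ℝ)
    (hv : ∀ k, 1 ≤ k → k ≤ N → 0 ≤ v k)
    (hw : ∀ k, k ≤ N → 0 ≤ w k)
    (hineq : ∀ n, 1 ≤ n → n ≤ N →
      ∑ k ∈ Finset.Icc 1 n, dker τ η n (n - k) * (w k - w (k - 1)) ≤
        ζ * ∑ k ∈ Finset.Icc 1 (n - 1), lam ^ (n - k - 1) * w k + v n) :
    ∀ n, 1 ≤ n → n ≤ N →
      w n ≤ Real.exp (ζ * (∑ k ∈ Finset.Icc 1 n, τ k) / (1 - lam)) *
        (w 0 + ∑ k ∈ Finset.Icc 1 n, v k / bker τ k 0) := by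
  have hb0' := gr_hb0 N τ hτ hr
  have hb1' := gr_hb1 N τ hτ hr
  have hb0τ' := gr_hb0τ N τ hτ hr
  have hq' := gr_hq N τ hτ hr η hη0 hηr
  have hlam' : (0:ℝ) < 1 - lam := by linarith
  -- facts about the dker kernels
  have hdnn : ∀ n, 1 ≤ n → n ≤ N → ∀ j, 0 ≤ dker τ η n j := by
    intro n h1 h2 j
    cases j with
    | zero => simpa [dker] using (hb0' n h1 h2).le
    | succ j =>
      simp only [dker, Nat.succ_ne_zero, if_false, Nat.succ_sub_one]
      exact mul_nonneg (pow_nonneg hη0.le _) (hq' n h1 h2)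
  have hdmono : ∀ n, 1 ≤ n → n ≤ N → ∀ j, dker τ η n (j+1) ≤ dker τ η n j := by
    intro n h1 h2 j
    cases j with
    | zero =>
      have hb := hb0' n h1 h2
      have hb1'' := hb1' n h1 h2
      simp [dker]
      nlinarith
    | succ j =>
      simp only [dker, Nat.succ_ne_zero, if_false, Nat.succ_sub_one]
      exact mul_le_mul_of_nonneg_right
        (pow_le_pow_of_le_one hη0.le hη1.le (Nat.le_succ j)) (hq' n h1 h2)
  -- facts about G
  set G : ℕ → ℝ := fun m => Real.exp (ζ * (∑ k ∈ Finset.Icc 1 m, τ k) / (1 - lam)) *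
      (w 0 + ∑ k ∈ Finset.Icc 1 m, v k / bker τ k 0) with hG
  have hτsum : ∀ m, m ≤ N → 0 ≤ ∑ k ∈ Finset.Icc 1 m, τ k := by
    intro m hm
    refine Finset.sum_nonneg fun k hk => ?_
    have hk' := Finset.mem_Icc.mp hk
    exact (hτ k hk'.1 (hk'.2.trans hm)).le
  have hSnn : ∀ m, m ≤ N → 0 ≤ ∑ k ∈ Finset.Icc 1 m, v k / bker τ k 0 := by
    intro m hm
    refine Finset.sum_nonneg fun k hk => ?_
    have hk' := Finset.mem_Icc.mp hk
    exact div_nonneg (hv k hk'.1 (hk'.2.trans hm)) (hb0' k hk'.1 (hk'.2.trans hm)).le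
  have hE1 : ∀ m, m ≤ N → 1 ≤ Real.exp (ζ * (∑ k ∈ Finset.Icc 1 m, τ k) / (1 - lam)) := by
    intro m hm
    exact Real.one_le_exp (div_nonneg (mul_nonneg hζ.le (hτsum m hm)) hlam'.le)
  have hGnn : ∀ m, m ≤ N → 0 ≤ G m := by
    intro m hm
    exact mul_nonneg (Real.exp_pos _).le (by linarith [hSnn m hm, hw 0 (Nat.zero_le N |>.trans (le_refl N)) ])
  have hw0G : ∀ m, m ≤ N → w 0 ≤ G m := by
    intro m hm
    have h1 : w 0 ≤ w 0 + ∑ k ∈ Finset.Icc 1 m, v k / bker τ k 0 := by linarith [hSnn m hm]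
    have h2 : w 0 + ∑ k ∈ Finset.Icc 1 m, v k / bker τ k 0 ≤
        Real.exp (ζ * (∑ k ∈ Finset.Icc 1 m, τ k) / (1 - lam)) *
          (w 0 + ∑ k ∈ Finset.Icc 1 m, v k / bker τ k 0) :=
      le_mul_of_one_le_left
        (by linarith [hSnn m hm, hw 0 (Nat.zero_le N)]) (hE1 m hm)
    exact h1.trans h2
  have hGmono : ∀ m m', m ≤ m' → m' ≤ N → G m ≤ G m' := by
    intro m m' hmm hm'
    have hsub : Finset.Icc 1 m ⊆ Finset.Icc 1 m' := Finset.Icc_subset_Icc_right hmm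
    have hτle : ∑ k ∈ Finset.Icc 1 m, τ k ≤ ∑ k ∈ Finset.Icc 1 m', τ k := by
      refine Finset.sum_le_sum_of_subset_of_nonneg hsub fun k hk _ => ?_
      have hk' := Finset.mem_Icc.mp hk
      exact (hτ k hk'.1 (hk'.2.trans hm')).le
    have hSle : ∑ k ∈ Finset.Icc 1 m, v k / bker τ k 0
        ≤ ∑ k ∈ Finset.Icc 1 m', v k / bker τ k 0 := by
      refine Finset.sum_le_sum_of_subset_of_nonneg hsub fun k hk _ => ?_
      have hk' := Finset.mem_Icc.mp hk
      exact div_nonneg (hv k hk'.1 (hk'.2.trans hm')) (hb0' k hk'.1 (hk'.2.trans hm')).le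
    have hexp : Real.exp (ζ * (∑ k ∈ Finset.Icc 1 m, τ k) / (1 - lam))
        ≤ Real.exp (ζ * (∑ k ∈ Finset.Icc 1 m', τ k) / (1 - lam)) := by
      apply Real.exp_le_exp.mpr
      exact (div_le_div_iff_of_pos_right hlam').mpr (mul_le_mul_of_nonneg_left hτle hζ.le)
    exact mul_le_mul hexp (add_le_add (le_refl _) hSle)
      (by linarith [hSnn m (hmm.trans hm'), hw 0 (Nat.zero_le N)]) (Real.exp_pos _).le
  -- main claim by strong induction
  have claim : ∀ n, 1 ≤ n → n ≤ N → w n ≤ G n := by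
    intro n
    induction n using Nat.strong_induction_on with
    | _ n IH =>
      intro hn1 hnN
      obtain ⟨m, rfl⟩ : ∃ m, n = m + 1 := ⟨n - 1, by omega⟩
      have hmN : m ≤ N := by omega
      have hd0b : dker τ η (m+1) 0 = bker τ (m+1) 0 := by simp [dker]
      have hd0pos : 0 < dker τ η (m+1) 0 := by
        rw [hd0b]; exact hb0' (m+1) (by omega) hnN
      have hwk : ∀ k, k ≤ m → w k ≤ G m := by
        intro k hk
        rcases Nat.eq_zero_or_pos k with rfl | hk1
        · exact hw0G m hmN
        · exact (IH k (by omega) hk1 (by omega)).trans (hGmono k m hk hmN)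
      have h1 := hineq (m+1) (by omega) hnN
      rw [gr_abel w (m+1) (by omega) (dker τ η (m+1))] at h1
      simp only [Nat.add_sub_cancel] at h1
      -- telescoping bound for the Abel remainder sum
      have htel : ∑ k ∈ Finset.Icc 1 m, (dker τ η (m+1) (m+1-k) - dker τ η (m+1) (m+1-k-1))
          = dker τ η (m+1) m - dker τ η (m+1) 0 := by
        have h := gr_telesc (fun k => -dker τ η (m+1) (m-k)) m
        have h2 : ∑ k ∈ Finset.Icc 1 m,
            (dker τ η (m+1) (m+1-k) - dker τ η (m+1) (m+1-k-1))
            = ∑ k ∈ Finset.Icc 1 m, ((fun k => -dker τ η (m+1) (m-k)) k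
              - (fun k => -dker τ η (m+1) (m-k)) (k-1)) := by
          refine Finset.sum_congr rfl fun k hk => ?_
          have hk' := Finset.mem_Icc.mp hk
          have e1 : m + 1 - k - 1 = m - k := by omega
          have e2 : m + 1 - k = m - (k-1) := by omega
          rw [e1, e2]; ring
        rw [h2, h]
        simp only [Nat.sub_self, Nat.sub_zero]
        ring
      have hT : (dker τ η (m+1) m - dker τ η (m+1) 0) * G m ≤
          ∑ k ∈ Finset.Icc 1 m, (dker τ η (m+1) (m+1-k) - dker τ η (m+1) (m+1-k-1)) * w k := by
        have hstep : ∑ k ∈ Finset.Icc 1 m,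
            (dker τ η (m+1) (m+1-k) - dker τ η (m+1) (m+1-k-1)) * G m
            ≤ ∑ k ∈ Finset.Icc 1 m,
              (dker τ η (m+1) (m+1-k) - dker τ η (m+1) (m+1-k-1)) * w k := by
          refine Finset.sum_le_sum fun k hk => ?_
          have hk' := Finset.mem_Icc.mp hk
          have hcoef : dker τ η (m+1) (m+1-k) - dker τ η (m+1) (m+1-k-1) ≤ 0 := by
            have hmono := hdmono (m+1) (by omega) hnN (m+1-k-1)
            have e : (m+1-k-1)+1 = m+1-k := by omega
            rw [e] at hmono; linarith
          exact mul_le_mul_of_nonpos_left (hwk k hk'.2) hcoef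
        rw [← Finset.sum_mul, htel] at hstep
        exact hstep
      have hgeo : ζ * ∑ k ∈ Finset.Icc 1 m, lam ^ (m+1-k-1) * w k
          ≤ ζ * ((1/(1-lam)) * G m) := by
        apply mul_le_mul_of_nonneg_left ?_ hζ.le
        have h2 : ∑ k ∈ Finset.Icc 1 m, lam ^ (m+1-k-1) * w k
            ≤ ∑ k ∈ Finset.Icc 1 m, lam ^ (m-k) * G m := by
          refine Finset.sum_le_sum fun k hk => ?_
          have hk' := Finset.mem_Icc.mp hk
          have e : m + 1 - k - 1 = m - k := by omega
          rw [e]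
          exact mul_le_mul_of_nonneg_left (hwk k hk'.2) (by positivity)
        have h3 : ∑ k ∈ Finset.Icc 1 m, lam ^ (m-k) * G m ≤ (1/(1-lam)) * G m := by
          rw [← Finset.sum_mul]
          exact mul_le_mul_of_nonneg_right (gr_geomIcc lam hlam0.le hlam1 m) (hGnn m hmN)
        linarith
      have hw0d : dker τ η (m+1) m * w 0 ≤ dker τ η (m+1) m * G m :=
        mul_le_mul_of_nonneg_left (hw0G m hmN) (hdnn (m+1) (by omega) hnN m)
      have key : dker τ η (m+1) 0 * w (m+1)
          ≤ ζ * ((1/(1-lam)) * G m) + v (m+1) + dker τ η (m+1) 0 * G m := by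
        rw [sub_mul] at hT
        linarith
      set a := ζ * τ (m+1) / (1 - lam) with ha
      have hstep2 : w (m+1) ≤ Real.exp a * G m + v (m+1) / dker τ η (m+1) 0 := by
        rw [← mul_le_mul_iff_right₀ hd0pos]
        have hval : dker τ η (m+1) 0 * (Real.exp a * G m + v (m+1) / dker τ η (m+1) 0)
            = dker τ η (m+1) 0 * Real.exp a * G m + v (m+1) := by
          field_simp
        rw [hval]
        have hexp := Real.add_one_le_exp a
        have hτb : 1 ≤ τ (m+1) * bker τ (m+1) 0 := hb0τ' (m+1) (by omega) hnN
        have h5 : dker τ η (m+1) 0 + ζ * (1/(1-lam)) ≤ dker τ η (m+1) 0 * Real.exp a := by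
          have h6 : ζ * (1/(1-lam)) ≤ dker τ η (m+1) 0 * a := by
            rw [ha, hd0b, show bker τ (m+1) 0 * (ζ * τ (m+1) / (1-lam))
                = ζ * ((τ (m+1) * bker τ (m+1) 0) / (1-lam)) from by ring]
            refine mul_le_mul_of_nonneg_left ?_ hζ.le
            exact (div_le_div_iff_of_pos_right hlam').mpr (by linarith)
          have h7 := mul_le_mul_of_nonneg_left hexp hd0pos.le
          nlinarith
        have h8 := mul_le_mul_of_nonneg_right h5 (hGnn m hmN)
        rw [add_mul] at h8
        have h9 : ζ * (1/(1-lam)) * G m = ζ * ((1/(1-lam)) * G m) := by ring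
        linarith
      have hfin : Real.exp a * G m + v (m+1) / dker τ η (m+1) 0 ≤ G (m+1) := by
        have hsplitS : (∑ k ∈ Finset.Icc 1 (m+1), v k / bker τ k 0)
            = (∑ k ∈ Finset.Icc 1 m, v k / bker τ k 0) + v (m+1) / bker τ (m+1) 0 :=
          Finset.sum_Icc_succ_top (by omega) _
        have hsplitτ : (∑ k ∈ Finset.Icc 1 (m+1), τ k)
            = (∑ k ∈ Finset.Icc 1 m, τ k) + τ (m+1) :=
          Finset.sum_Icc_succ_top (by omega) _
        have hEsplit : Real.exp (ζ * (∑ k ∈ Finset.Icc 1 (m+1), τ k)/(1-lam))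
            = Real.exp (ζ * (∑ k ∈ Finset.Icc 1 m, τ k)/(1-lam)) * Real.exp a := by
          rw [← Real.exp_add, hsplitτ, ha]
          congr 1
          ring
        have hE1' := hE1 (m+1) hnN
        rw [hEsplit] at hE1'
        have hvd : 0 ≤ v (m+1) / bker τ (m+1) 0 :=
          div_nonneg (hv (m+1) (by omega) hnN) (hb0' (m+1) (by omega) hnN).le
        have hA : 0 ≤ w 0 + ∑ k ∈ Finset.Icc 1 m, v k / bker τ k 0 := by
          linarith [hSnn m hmN, hw 0 (Nat.zero_le N)]
        have hGm1 : G (m+1) = Real.exp (ζ * (∑ k ∈ Finset.Icc 1 m, τ k)/(1-lam)) * Real.exp a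
            * (w 0 + (∑ k ∈ Finset.Icc 1 m, v k / bker τ k 0) + v (m+1) / bker τ (m+1) 0) := by
          rw [hG]
          simp only []
          rw [hsplitS, hEsplit]
          ring
        rw [hGm1, hG, hd0b]
        simp only []
        nlinarith [mul_nonneg (sub_nonneg.mpr hE1') hvd,
          mul_le_mul_of_nonneg_right hE1' hvd]
      exact hstep2.trans hfin
  intro n hn1 hnN
  exact claim n hn1 hnN
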